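/- For positive integers n and k, the number of partitions with perimeter n into parts congruent to 1 modulo 2 (odd parts) with largest part exactly 2k-1 equals the binomial coefficient C(n-k, k-1). -/

import Mathlib

/-- A partition: a nonempty, nonincreasing list of positive integers. -/
def IsPartition (l : List ℕ) : Prop :=
  l ≠ [] ∧ l.Pairwise (· ≥ ·) ∧ ∀ x ∈ l, 0 < x

/-- Perimeter: (largest part) + (number of parts) - 1. -/
def perimeter (l : List ℕ) : ℕ := l.headI + l.length - 1

/-- d-distinct: consecutive parts differ by at least d. -/
def DDistinct (d : ℕ) (l : List ℕ) : Prop := l.Chain' (fun x y => y + d ≤ x)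

theorem stmt4 (n k : ℕ) (hn : 0 < n) (hk : 0 < k) :
    Nat.card {l : List ℕ // IsPartition l ∧ perimeter l = n ∧ (∀ x ∈ l, Odd x) ∧
        l.headI = 2 * k - 1}
      = Nat.choose (n - k) (k - 1) := by
  by_cases hbig : 2 * k - 1 ≤ n
  · -- main case
    set m := n - (2 * k - 1) with hm
    have hmn : n = 2 * k - 1 + m := by omega
    -- the map from Sym (Fin k) m
    set G : Sym (Fin k) m → List ℕ := fun s =>
      (2 * k - 1) :: (Multiset.sort (s.val.map (fun i : Fin k => 2 * (i : ℕ) + 1)) (· ≤ ·)).reverse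
      with hG
    have hmem : ∀ s : Sym (Fin k) m, IsPartition (G s) ∧ perimeter (G s) = n ∧
        (∀ x ∈ G s, Odd x) ∧ (G s).headI = 2 * k - 1 := by
      intro s
      set ms : Multiset ℕ := s.val.map (fun i : Fin k => 2 * (i : ℕ) + 1) with hms
      have hmsmem : ∀ x ∈ ms, ∃ i : ℕ, i < k ∧ x = 2 * i + 1 := by
        intro x hx
        rw [hms, Multiset.mem_map] at hx
        obtain ⟨i, _, rfl⟩ := hx
        exact ⟨i, i.isLt, rfl⟩
      have hlen : (Multiset.sort ms (· ≤ ·)).length = m := by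
        rw [Multiset.length_sort, hms, Multiset.card_map, s.property]
      have htmem : ∀ x ∈ (Multiset.sort ms (· ≤ ·)).reverse, ∃ i : ℕ, i < k ∧ x = 2 * i + 1 := by
        intro x hx
        rw [List.mem_reverse, Multiset.mem_sort] at hx
        exact hmsmem x hx
      refine ⟨⟨by simp [hG], ?_, ?_⟩, ?_, ?_, by simp [hG]⟩
      · rw [hG, List.pairwise_cons]
        constructor
        · intro b hb
          obtain ⟨i, hi, rfl⟩ := htmem b hb
          simp only [ge_iff_le]
          omega
        · rw [List.pairwise_reverse]
          exact (Multiset.pairwise_sort ms (· ≤ ·)).imp (fun h => h)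
      · intro x hx
        rw [hG, List.mem_cons] at hx
        rcases hx with rfl | hx
        · omega
        · obtain ⟨i, hi, rfl⟩ := htmem x hx; omega
      · simp only [perimeter, hG, List.headI_cons, List.length_cons, List.length_reverse, hlen, Multiset.length_sort, Multiset.card_map, s.property]
        omega
      · intro x hx
        rw [hG, List.mem_cons] at hx
        rcases hx with rfl | hx
        · exact ⟨k - 1, by omega⟩
        · obtain ⟨i, hi, rfl⟩ := htmem x hx; exact ⟨i, rfl⟩
    set G' : Sym (Fin k) m → {l : List ℕ // IsPartition l ∧ perimeter l = n ∧ (∀ x ∈ l, Odd x) ∧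
        l.headI = 2 * k - 1} := fun s => ⟨G s, hmem s⟩ with hG'
    have hinj : Function.Injective G' := by
      intro s1 s2 h
      have h2 : G s1 = G s2 := congrArg Subtype.val h
      rw [hG, List.cons.injEq] at h2
      have h3 := congrArg List.reverse h2.2
      simp only [List.reverse_reverse] at h3
      have h4 := congrArg (fun l : List ℕ => (↑l : Multiset ℕ)) h3
      simp only [Multiset.sort_eq] at h4
      have h5 := Multiset.map_injective (f := fun i : Fin k => 2 * (i : ℕ) + 1)
        (fun a b hab => by simp only at hab; exact Fin.ext (by omega)) h4
      exact Sym.ext h5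
    have hsurj : Function.Surjective G' := by
      rintro ⟨l, ⟨hne, hsort, hpos⟩, hperi, hodd, hhead⟩
      obtain ⟨a, t, rfl⟩ := List.exists_cons_of_ne_nil hne
      have ha : a = 2 * k - 1 := hhead
      subst ha
      rw [List.pairwise_cons] at hsort
      have htlen : t.length = m := by
        simp only [perimeter, List.headI_cons, List.length_cons] at hperi
        omega
      have Hlt : ∀ x ∈ t, (x - 1) / 2 < k := by
        intro x hx
        have h1 := hsort.1 x hx
        have h2 := hpos x (List.mem_cons_of_mem _ hx)
        simp only [ge_iff_le] at h1
        omega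
      refine ⟨⟨↑(t.pmap (fun x hx => (⟨(x - 1) / 2, hx⟩ : Fin k)) Hlt), by
        simp [htlen]⟩, ?_⟩
      apply Subtype.ext
      show G _ = _
      rw [hG]
      simp only
      have hmap : (Multiset.map (fun i : Fin k => 2 * (i : ℕ) + 1)
          ↑(t.pmap (fun x hx => (⟨(x - 1) / 2, hx⟩ : Fin k)) Hlt)) = (↑t : Multiset ℕ) := by
        rw [Multiset.map_coe]
        congr 1
        have key : ∀ (u : List ℕ) (H : ∀ x ∈ u, (x - 1) / 2 < k), (∀ x ∈ u, Odd x) →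
            List.map (fun i : Fin k => 2 * (i : ℕ) + 1)
              (u.pmap (fun x hx => (⟨(x - 1) / 2, hx⟩ : Fin k)) H) = u := by
          intro u
          induction u with
          | nil => intro _ _; rfl
          | cons a u ih =>
            intro H ho
            simp only [List.pmap, List.map_cons]
            rw [ih _ (fun x hx => ho x (List.mem_cons_of_mem _ hx))]
            obtain ⟨j, hj⟩ := ho a (List.mem_cons_self)
            simp only [List.cons.injEq, and_true]
            omega
        exact key t Hlt (fun x hx => hodd x (List.mem_cons_of_mem _ hx))
      rw [hmap]
      congr 1
      have hrev : Multiset.sort (↑t : Multiset ℕ) (· ≤ ·) = t.reverse := by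
        have hs1 : (Multiset.sort (↑t : Multiset ℕ) (· ≤ ·)).Pairwise (· ≤ ·) :=
          Multiset.pairwise_sort _ _
        have hs2 : t.reverse.Pairwise (· ≤ ·) := by
          rw [List.pairwise_reverse]
          exact hsort.2.imp (fun h => h)
        have hperm : List.Perm (Multiset.sort (↑t : Multiset ℕ) (· ≤ ·)) t.reverse := by
          rw [← Multiset.coe_eq_coe, Multiset.sort_eq, Multiset.coe_reverse]
        exact List.Perm.eq_of_pairwise' hs1 hs2 hperm
      rw [hrev, List.reverse_reverse]
    have hcard := Nat.card_eq_of_bijective G' ⟨hinj, hsurj⟩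
    rw [← hcard, Nat.card_eq_fintype_card, Sym.card_sym_eq_choose]
    rw [Fintype.card_fin]
    have h1 : k + m - 1 = n - k := by omega
    have h2 : n - k - m = k - 1 := by omega
    rw [h1, ← h2, Nat.choose_symm (by omega)]
  · -- empty case
    have he : IsEmpty {l : List ℕ // IsPartition l ∧ perimeter l = n ∧ (∀ x ∈ l, Odd x) ∧
        l.headI = 2 * k - 1} := by
      constructor
      rintro ⟨l, ⟨hne, _, _⟩, hperi, _, hhead⟩
      have hlen : 0 < l.length := List.length_pos_iff.2 hne
      simp only [perimeter, hhead] at hperi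
      omega
    rw [Nat.card_of_isEmpty, eq_comm, Nat.choose_eq_zero_of_lt (by omega)]
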